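/- Let K be an algebraically closed field, V and W nonzero finite-dimensional K-vector spaces, S an invertible K-linear endomorphism of V, and T a K-linear endomorphism of W. Define Φ : Hom_K(V, W) → Hom_K(V, W) by Φ(f) = T ∘ f ∘ S⁻¹. Then the set of eigenvalues of Φ is exactly the set { b·a⁻¹ : a is an eigenvalue of S and b is an eigenvalue of T }. -/

import Mathlib

/-- If an injective endomorphism of a finite-dimensional space preserves a submodule `p`,
then `A x ∈ p` implies `x ∈ p`. -/
lemma mem_of_apply_mem_aux {K V : Type*} [Field K] [AddCommGroup V] [Module K V]
    [FiniteDimensional K V] (A : V →ₗ[K] V) (hA : Function.Injective A)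
    (p : Submodule K V) (hp : ∀ x ∈ p, A x ∈ p) :
    ∀ x, A x ∈ p → x ∈ p := by
  intro x hx
  have hp' : p ≤ p.comap A := fun y hy => hp y hy
  let A' : p →ₗ[K] p := A.restrict hp'
  have hA' : Function.Injective A' := fun u v huv => by
    apply Subtype.ext
    apply hA
    exact congrArg Subtype.val huv
  have hsurj : Function.Surjective A' := LinearMap.injective_iff_surjective.mp hA'
  obtain ⟨u, hu⟩ := hsurj ⟨A x, hx⟩
  have : A u.1 = A x := congrArg Subtype.val hu
  have : (u : V) = x := hA this
  exact this ▸ u.2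

/-- Over an algebraically closed field `K`, if `S` is an invertible endomorphism of a nonzero
finite-dimensional space `V` and `T` an endomorphism of a nonzero finite-dimensional space `W`,
then the eigenvalues of `Φ : f ↦ T ∘ f ∘ S⁻¹` on `Hom_K(V, W)` are exactly the elements
`b * a⁻¹` with `a` an eigenvalue of `S` and `b` an eigenvalue of `T`. -/
theorem eigenvalues_conjugation_hom
    (K : Type*) [Field K] [IsAlgClosed K]
    (V W : Type*) [AddCommGroup V] [Module K V] [AddCommGroup W] [Module K W]
    [FiniteDimensional K V] [FiniteDimensional K W] [Nontrivial V] [Nontrivial W]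
    (S : V ≃ₗ[K] V) (T : Module.End K W)
    (Φ : Module.End K (V →ₗ[K] W))
    (hΦ : ∀ f : V →ₗ[K] W, Φ f = T ∘ₗ f ∘ₗ (S.symm : V →ₗ[K] V)) :
    {μ : K | Φ.HasEigenvalue μ} =
      {μ : K | ∃ a b : K,
        Module.End.HasEigenvalue (S : V →ₗ[K] V) a ∧ T.HasEigenvalue b ∧ μ = b * a⁻¹} := by
  have hSinj : Function.Injective (S : V →ₗ[K] V) := S.injective
  -- every eigenvalue of S is nonzero
  have hS_ne : ∀ a : K, Module.End.HasEigenvalue (S : V →ₗ[K] V) a → a ≠ 0 := by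
    intro a ha ha0
    obtain ⟨v, hv⟩ := ha.exists_hasEigenvector
    have : S v = 0 := by
      have := hv.apply_eq_smul
      rw [ha0, zero_smul] at this
      exact this
    exact hv.2 (hSinj (by simpa using this))
  ext μ
  simp only [Set.mem_setOf_eq]
  constructor
  · intro hμ
    obtain ⟨f, hf⟩ := hμ.exists_hasEigenvector
    have hf0 : f ≠ 0 := hf.2
    have key : ∀ u : V, T (f u) = μ • f (S u) := by
      intro u
      have h3 : (T ∘ₗ f ∘ₗ (S.symm : V →ₗ[K] V)) (S u) = (μ • f) (S u) := by
        rw [← hΦ f, hf.apply_eq_smul]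
      simpa using h3
    by_cases hμ0 : μ = 0
    · -- T has eigenvalue 0
      obtain ⟨u, hu⟩ : ∃ u, f u ≠ 0 := by
        by_contra h
        push_neg at h
        exact hf0 (LinearMap.ext fun u => h u)
      obtain ⟨a, ha⟩ := Module.End.exists_eigenvalue (S : V →ₗ[K] V)
      refine ⟨a, 0, ha, ?_, by rw [hμ0, zero_mul]⟩
      refine Module.End.hasEigenvalue_of_hasEigenvector ⟨?_, hu⟩
      rw [Module.End.mem_eigenspace_iff, zero_smul, key u, hμ0, zero_smul]
    · -- μ ≠ 0
      set p := LinearMap.ker f with hpdef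
      have hpS : ∀ x ∈ p, S x ∈ p := by
        intro x hx
        have hfx : f x = 0 := hx
        have := key x
        rw [hfx, map_zero] at this
        have : μ • f (S x) = 0 := this.symm
        have hfs : f (S x) = 0 := by
          rcases smul_eq_zero.mp this with h | h
          · exact absurd h hμ0
          · exact h
        exact hfs
      have hplt : p < ⊤ := by
        rcases lt_or_eq_of_le (le_top : p ≤ ⊤) with h | h
        · exact h
        · exfalso
          apply hf0
          apply LinearMap.ext
          intro x
          have : x ∈ p := h ▸ Submodule.mem_top
          simpa [hpdef] using this
      have : Nontrivial (V ⧸ p) := Submodule.Quotient.nontrivial_iff.mpr hplt.ne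
      -- induced map on quotient
      let Sq : V ⧸ p →ₗ[K] V ⧸ p := p.mapQ p (S : V →ₗ[K] V) (fun x hx => hpS x hx)
      obtain ⟨a, ha⟩ := Module.End.exists_eigenvalue Sq
      obtain ⟨xq, hxq⟩ := ha.exists_hasEigenvector
      obtain ⟨v, hv⟩ := p.mkQ_surjective xq
      have hv0 : f v ≠ 0 := by
        intro h
        apply hxq.2
        rw [← hv]
        simpa [Submodule.Quotient.mk_eq_zero, hpdef] using h
      have hSv : f (S v) = a • f v := by
        have h1 : Sq (p.mkQ v) = a • p.mkQ v := hv ▸ hxq.apply_eq_smul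
        have h2 : p.mkQ (S v) = p.mkQ (a • v) := by
          simpa [Sq, Submodule.mapQ_apply] using h1
        have h3 : S v - a • v ∈ p := (Submodule.Quotient.eq p).mp h2
        have h4 : f (S v - a • v) = 0 := h3
        have h5 : f (S v) - a • f v = 0 := by
          rw [map_sub, map_smul] at h4; exact h4
        exact sub_eq_zero.mp h5
      have haS : Module.End.HasEigenvalue (S : V →ₗ[K] V) a := by
        by_contra hna
        have hinj : Function.Injective ((S : V →ₗ[K] V) - a • (1 : Module.End K V)) := by
          rw [← LinearMap.ker_eq_bot, ← Module.End.eigenspace_def]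
          rw [Module.End.hasEigenvalue_iff, not_not] at hna
          exact hna
        have hinv : ∀ x ∈ p, ((S : V →ₗ[K] V) - a • (1 : Module.End K V)) x ∈ p := by
          intro x hx
          have h1 : f x = 0 := hx
          have : f (((S : V →ₗ[K] V) - a • (1 : Module.End K V)) x) = 0 := by
            have h2 : f ((S : V →ₗ[K] V) x) = 0 := hpS x hx
            simp only [LinearMap.sub_apply, LinearMap.smul_apply, Module.End.one_apply,
              map_sub, map_smul, h1, h2, smul_zero, sub_zero]
          exact this
        have hAv : ((S : V →ₗ[K] V) - a • (1 : Module.End K V)) v ∈ p := by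
          have h2 : f ((S : V →ₗ[K] V) v) = a • f v := hSv
          have : f (((S : V →ₗ[K] V) - a • (1 : Module.End K V)) v) = 0 := by
            simp only [LinearMap.sub_apply, LinearMap.smul_apply, Module.End.one_apply,
              map_sub, map_smul, h2, sub_self]
          exact this
        exact hv0 (mem_of_apply_mem_aux _ hinj p hinv v hAv)
      have ha0 : a ≠ 0 := hS_ne a haS
      refine ⟨a, μ * a, haS, ?_, by field_simp⟩
      refine Module.End.hasEigenvalue_of_hasEigenvector ⟨?_, hv0⟩
      rw [Module.End.mem_eigenspace_iff, key v, hSv, smul_smul]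
  · rintro ⟨a, b, ha, hb, rfl⟩
    have ha0 : a ≠ 0 := hS_ne a ha
    -- find dual eigenvector φ with φ ∘ S = a • φ
    have hnotinj : ¬ Function.Injective ((S : V →ₗ[K] V) - a • (1 : Module.End K V)) := by
      obtain ⟨v, hv⟩ := ha.exists_hasEigenvector
      intro hinj
      apply hv.2
      apply hinj
      simp [LinearMap.sub_apply, hv.apply_eq_smul]
    have hrange : LinearMap.range ((S : V →ₗ[K] V) - a • (1 : Module.End K V)) < ⊤ := by
      rcases lt_or_eq_of_le (le_top : LinearMap.range ((S : V →ₗ[K] V) - a • (1 : Module.End K V)) ≤ ⊤) with h | h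
      · exact h
      · exact absurd (LinearMap.injective_iff_surjective.mpr
          (LinearMap.range_eq_top.mp h)) hnotinj
    obtain ⟨φ, hφ0, hφ⟩ := Submodule.exists_dual_map_eq_bot_of_lt_top hrange inferInstance
    have hφS : ∀ x, φ (S x) = a * φ x := by
      intro x
      have hx : ((S : V →ₗ[K] V) - a • (1 : Module.End K V)) x ∈ LinearMap.range ((S : V →ₗ[K] V) - a • (1 : Module.End K V)) :=
        LinearMap.mem_range_self _ x
      have : φ (((S : V →ₗ[K] V) - a • (1 : Module.End K V)) x) = 0 := by
        have := hφ ▸ Submodule.mem_map_of_mem (f := φ) hx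
        simpa using this
      have h2 : φ (S x) - a * φ x = 0 := by
        simpa [LinearMap.sub_apply, smul_eq_mul] using this
      exact sub_eq_zero.mp h2
    have hφSsymm : ∀ y, φ (S.symm y) = a⁻¹ * φ y := by
      intro y
      have h := hφS (S.symm y)
      rw [S.apply_symm_apply] at h
      rw [h, ← mul_assoc, inv_mul_cancel₀ ha0, one_mul]
    obtain ⟨w, hw⟩ := hb.exists_hasEigenvector
    let f : V →ₗ[K] W := φ.smulRight w
    have hfne : f ≠ 0 := by
      obtain ⟨u, hu⟩ : ∃ u, φ u ≠ 0 := by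
        by_contra h
        push_neg at h
        exact hφ0 (LinearMap.ext fun u => h u)
      intro h
      have : f u = 0 := by rw [h]; rfl
      exact (smul_ne_zero hu hw.2) (by simpa [f, LinearMap.smulRight_apply] using this)
    refine Module.End.hasEigenvalue_of_hasEigenvector ⟨?_, hfne⟩
    rw [Module.End.mem_eigenspace_iff, hΦ f]
    apply LinearMap.ext
    intro v
    show T ((φ (S.symm v)) • w) = (b * a⁻¹) • (φ v • w)
    rw [map_smul, hw.apply_eq_smul, hφSsymm, smul_smul, smul_smul]
    congr 1
    ring
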